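/- Let G be a group, t ∈ G with t² = e, θ the inner automorphism g ↦ t g t⁻¹, and H = G^θ = Z_G(t) the centralizer of t. If F is a maximal element, under inclusion, of the set of elementary abelian 2-subgroups of G that contain t and are generated by conjugates of t, then X = {gH ∈ G/H : g t g⁻¹ ∈ F} is a maximal antipodal set in G/H containing the origin o = eH. -/
import Mathlib


/-- `X ⊆ G ⧸ H` is antipodal if `φ(g₂⁻¹g₁) ∈ H` for all cosets `g₁H, g₂H ∈ X`,
where `φ(g) = g·θ(g)⁻¹` is the Cartan quadratic map. -/
def IsAntipodal {G : Type*} [Group G] (θ : G → G) (H : Subgroup G) (X : Set (G ⧸ H)) : Prop :=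
  ∀ g₁ g₂ : G, (QuotientGroup.mk g₁ : G ⧸ H) ∈ X → (QuotientGroup.mk g₂ : G ⧸ H) ∈ X →
    (g₂⁻¹ * g₁) * (θ (g₂⁻¹ * g₁))⁻¹ ∈ H

/-- `X` is a maximal antipodal set if it is antipodal and not properly contained in
any other antipodal subset of `G ⧸ H`. -/
def MaximalAntipodal {G : Type*} [Group G] (θ : G → G) (H : Subgroup G) (X : Set (G ⧸ H)) : Prop :=
  IsAntipodal θ H X ∧ ∀ Y : Set (G ⧸ H), IsAntipodal θ H Y → X ⊆ Y → Y = X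

section aux
variable {G : Type*} [Group G]

lemma elem_comm (F : Subgroup G) (h2 : ∀ a ∈ F, a ^ 2 = 1) :
    ∀ a ∈ F, ∀ b ∈ F, a * b = b * a := by
  intro a ha b hb
  have hab : (a * b) * (a * b) = 1 := by
    have := h2 (a * b) (F.mul_mem ha hb); rwa [sq] at this
  have ha1 : a * a = 1 := by have := h2 a ha; rwa [sq] at this
  have hb1 : b * b = 1 := by have := h2 b hb; rwa [sq] at this
  calc a * b = a * ((a * b) * (a * b)) * b := by rw [hab]; group
    _ = (a * a) * (b * a) * (b * b) := by group
    _ = b * a := by rw [ha1, hb1]; group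

lemma phi_eq (t c : G) (htinv : t⁻¹ = t) :
    c * (t * c * t⁻¹)⁻¹ = c * t * c⁻¹ * t := by
  simp [mul_inv_rev, htinv, mul_assoc]

/-- `φ(c) ∈ Z(t)` iff `c t c⁻¹` commutes with `t`, given `t*t=1`. -/
lemma phi_mem_iff (t c : G) (htt : t * t = 1) :
    c * (t * c * t⁻¹)⁻¹ ∈ Subgroup.centralizer {t} ↔
      t * (c * t * c⁻¹) = (c * t * c⁻¹) * t := by
  have htinv : t⁻¹ = t := inv_eq_of_mul_eq_one_right htt
  rw [Subgroup.mem_centralizer_singleton_iff, phi_eq t c htinv]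
  constructor
  · intro h
    have h' : c * t * c⁻¹ = t * (c * t * c⁻¹) * t := by
      calc c * t * c⁻¹ = c * t * c⁻¹ * (t * t) := by rw [htt, mul_one]
        _ = (c * t * c⁻¹ * t) * t := by group
        _ = t * (c * t * c⁻¹ * t) := by rw [h]
        _ = t * (c * t * c⁻¹) * t := by group
    calc t * (c * t * c⁻¹) = t * (t * (c * t * c⁻¹) * t) := by rw [← h']
      _ = (t * t) * (c * t * c⁻¹) * t := by group
      _ = (c * t * c⁻¹) * t := by rw [htt, one_mul]
  · intro h
    calc c * t * c⁻¹ * t * t = (t * (c * t * c⁻¹)) * t := by rw [← h]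
      _ = t * (c * t * c⁻¹ * t) := by group

/-- conjugation transfer: `t` commutes with `g⁻¹ x g` iff `g t g⁻¹` commutes with `x`. -/
lemma conj_comm_iff (t g x : G) :
    t * (g⁻¹ * x * g) = (g⁻¹ * x * g) * t ↔ (g * t * g⁻¹) * x = x * (g * t * g⁻¹) := by
  constructor
  · intro h
    have := congrArg (fun z => g * z * g⁻¹) h
    simp only [mul_assoc, mul_inv_cancel_left, inv_mul_cancel_left, mul_inv_cancel,
      inv_mul_cancel, mul_one, one_mul] at this ⊢
    exact this
  · intro h
    have := congrArg (fun z => g⁻¹ * z * g) h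
    simp only [mul_assoc, mul_inv_cancel_left, inv_mul_cancel_left, mul_inv_cancel,
      inv_mul_cancel, mul_one, one_mul] at this ⊢
    exact this

end aux

/-- for `θ` the inner involution `g ↦ tgt⁻¹` (`t² = 1`) and `H = Z_G(t)`, if `F`
is a maximal element of the set of elementary abelian 2-subgroups of `G` containing `t` and
generated by conjugates of `t`, then `X = {gH : gtg⁻¹ ∈ F}` is a maximal antipodal set in `G/H`
containing the origin. -/
theorem stmt_7 {G : Type*} [Group G] (t : G) (ht : t ^ 2 = 1)
    (H : Subgroup G) (hH : H = Subgroup.centralizer {t})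
    (F : Subgroup G)
    (hF : (∀ a ∈ F, a ^ 2 = 1) ∧ t ∈ F ∧
      ∃ S ⊆ {y : G | ∃ g : G, y = g * t * g⁻¹}, Subgroup.closure S = F)
    (hFmax : ∀ F' : Subgroup G,
      ((∀ a ∈ F', a ^ 2 = 1) ∧ t ∈ F' ∧
        ∃ S ⊆ {y : G | ∃ g : G, y = g * t * g⁻¹}, Subgroup.closure S = F') →
      F ≤ F' → F' = F) :
    (QuotientGroup.mk (1 : G) : G ⧸ H) ∈
        {x : G ⧸ H | ∃ g : G, (QuotientGroup.mk g : G ⧸ H) = x ∧ g * t * g⁻¹ ∈ F} ∧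
      MaximalAntipodal (fun g => t * g * t⁻¹) H
        {x : G ⧸ H | ∃ g : G, (QuotientGroup.mk g : G ⧸ H) = x ∧ g * t * g⁻¹ ∈ F} := by
  obtain ⟨hFsq, htF, S, hS, hSF⟩ := hF
  have htt : t * t = 1 := by rw [← sq]; exact ht
  have htinv : t⁻¹ = t := inv_eq_of_mul_eq_one_right htt
  set X : Set (G ⧸ H) :=
    {x : G ⧸ H | ∃ g : G, (QuotientGroup.mk g : G ⧸ H) = x ∧ g * t * g⁻¹ ∈ F} with hXdef
  -- membership in X is well-defined on representatives
  have hXmem : ∀ g : G, ((QuotientGroup.mk g : G ⧸ H) ∈ X ↔ g * t * g⁻¹ ∈ F) := by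
    intro g
    constructor
    · rintro ⟨g', hg', hgF⟩
      have hmem : g'⁻¹ * g ∈ H := (QuotientGroup.eq).mp hg'
      rw [hH, Subgroup.mem_centralizer_singleton_iff] at hmem
      have heq : g * t * g⁻¹ = g' * t * g'⁻¹ := by
        calc g * t * g⁻¹ = g' * ((g'⁻¹ * g) * t * (g'⁻¹ * g)⁻¹) * g'⁻¹ := by group
          _ = g' * (t * (g'⁻¹ * g) * (g'⁻¹ * g)⁻¹) * g'⁻¹ := by rw [hmem]
          _ = g' * t * g'⁻¹ := by group
      rw [heq]; exact hgF
    · intro hg; exact ⟨g, rfl, hg⟩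
  constructor
  · exact ⟨1, rfl, by simpa using htF⟩
  constructor
  -- antipodality
  · intro g₁ g₂ h₁ h₂
    rw [hXmem] at h₁ h₂
    rw [hH]
    refine (phi_mem_iff t (g₂⁻¹ * g₁) htt).mpr ?_
    have hkey : (g₂⁻¹ * g₁) * t * (g₂⁻¹ * g₁)⁻¹ = g₂⁻¹ * (g₁ * t * g₁⁻¹) * g₂ := by group
    rw [hkey]
    exact (conj_comm_iff t g₂ (g₁ * t * g₁⁻¹)).mpr
      (elem_comm F hFsq _ h₂ _ h₁)
  -- maximality
  · intro Y hY hXY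
    refine Set.Subset.antisymm ?_ hXY
    intro y hy
    obtain ⟨g, rfl⟩ := QuotientGroup.mk_surjective y
    rw [hXmem]
    set a := g * t * g⁻¹ with ha
    have ha2 : a * a = 1 := by
      rw [ha]
      calc g * t * g⁻¹ * (g * t * g⁻¹) = g * (t * t) * g⁻¹ := by group
        _ = 1 := by rw [htt]; group
    have hainv : a⁻¹ = a := inv_eq_of_mul_eq_one_right ha2
    -- a commutes with every generator of F
    have hcommS : ∀ s ∈ S, a * s = s * a := by
      intro s hs
      obtain ⟨g₁, hseq⟩ := hS hs
      have hsF : s ∈ F := hSF ▸ Subgroup.subset_closure hs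
      have h₁ : (QuotientGroup.mk g₁ : G ⧸ H) ∈ X :=
        (hXmem g₁).mpr (by rw [← hseq]; exact hsF)
      have hmem := hY g₁ g (hXY h₁) hy
      rw [hH] at hmem
      have hc := (phi_mem_iff t (g⁻¹ * g₁) htt).mp hmem
      have hkey : (g⁻¹ * g₁) * t * (g⁻¹ * g₁)⁻¹ = g⁻¹ * (g₁ * t * g₁⁻¹) * g := by group
      rw [hkey] at hc
      have hcomm := (conj_comm_iff t g (g₁ * t * g₁⁻¹)).mp hc
      rw [← hseq] at hcomm
      exact hcomm
    -- hence a commutes with every element of F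
    have hFle : F ≤ Subgroup.centralizer {a} := by
      rw [← hSF]
      refine (Subgroup.closure_le _).mpr ?_
      intro s hs
      rw [SetLike.mem_coe, Subgroup.mem_centralizer_singleton_iff]
      exact (hcommS s hs).symm
    have hcommF : ∀ f ∈ F, f * a = a * f := fun f hf =>
      Subgroup.mem_centralizer_singleton_iff.mp (hFle hf)
    -- a commutes with any x such that x*a ∈ F
    have haux : ∀ x : G, x * a ∈ F → a * x = x * a := by
      intro x hx
      have h1 : (x * a) * a = x := by rw [mul_assoc, ha2, mul_one]
      have h2 := hcommF (x * a) hx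
      calc a * x = a * x * (a * a) := by rw [ha2, mul_one]
        _ = (a * (x * a)) * a := by group
        _ = ((x * a) * a) * a := by rw [← h2]
        _ = x * a := by rw [h1]
    -- the subgroup generated by F and a
    let K : Subgroup G :=
      { carrier := {x : G | x ∈ F ∨ x * a ∈ F}
        one_mem' := Or.inl F.one_mem
        mul_mem' := by
          rintro x y (hx | hx) (hy | hy)
          · exact Or.inl (F.mul_mem hx hy)
          · refine Or.inr ?_
            rw [mul_assoc]; exact F.mul_mem hx hy
          · refine Or.inr ?_
            have : x * y * a = (x * a) * y := by
              calc x * y * a = x * (y * a) := by group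
                _ = x * (a * y) := by rw [hcommF y hy]
                _ = (x * a) * y := by group
            rw [this]; exact F.mul_mem hx hy
          · refine Or.inl ?_
            have : x * y = (x * a) * (y * a) := by
              calc x * y = x * (a * a) * y := by rw [ha2]; group
                _ = (x * a) * (a * y) := by group
                _ = (x * a) * (y * a) := by rw [haux y hy]
            rw [this]; exact F.mul_mem hx hy
        inv_mem' := by
          rintro x (hx | hx)
          · exact Or.inl (F.inv_mem hx)
          · refine Or.inr ?_
            have h3 : x⁻¹ * a = a * x⁻¹ := by
              have := congrArg (fun z => x⁻¹ * z * x⁻¹) (haux x hx)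
              simp only [mul_assoc, inv_mul_cancel_left, mul_inv_cancel_left,
                mul_inv_cancel, inv_mul_cancel, mul_one, one_mul] at this
              exact this
            have h4 : (x * a)⁻¹ = a * x⁻¹ := by rw [mul_inv_rev, hainv]
            rw [h3, ← h4]; exact F.inv_mem hx }
    have hKmem : ∀ x : G, x ∈ K ↔ (x ∈ F ∨ x * a ∈ F) := fun x => Iff.rfl
    have hKsq : ∀ b ∈ K, b ^ 2 = 1 := by
      intro b hb
      rcases (hKmem b).mp hb with hb | hb
      · exact hFsq b hb
      · have hb' := haux b hb
        rw [sq]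
        calc b * b = b * (a * a) * b := by rw [ha2]; group
          _ = (b * a) * (a * b) := by group
          _ = (b * a) * (b * a) := by rw [hb']
          _ = 1 := by have := hFsq (b * a) hb; rwa [sq] at this
    have hFK : F ≤ K := fun x hx => Or.inl hx
    have hcl : Subgroup.closure (S ∪ {a}) = K := by
      refine le_antisymm ((Subgroup.closure_le _).mpr ?_) ?_
      · rintro s (hs | hs)
        · exact Or.inl (hSF ▸ Subgroup.subset_closure hs)
        · rw [Set.mem_singleton_iff] at hs
          subst hs
          exact Or.inr (by rw [ha2]; exact F.one_mem)
      · intro x hx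
        rcases (hKmem x).mp hx with hx | hx
        · have hx' : x ∈ Subgroup.closure S := by rw [hSF]; exact hx
          exact Subgroup.closure_mono Set.subset_union_left hx'
        · have hx2 : x = (x * a) * a := by rw [mul_assoc, ha2, mul_one]
          rw [hx2]
          refine Subgroup.mul_mem _ ?_ ?_
          · have hx' : x * a ∈ Subgroup.closure S := by rw [hSF]; exact hx
            exact Subgroup.closure_mono Set.subset_union_left hx'
          · exact Subgroup.subset_closure (Or.inr rfl)
    have hScond : (S ∪ {a}) ⊆ {y : G | ∃ g : G, y = g * t * g⁻¹} := by
      rintro s (hs | hs)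
      · exact hS hs
      · rw [Set.mem_singleton_iff] at hs
        exact ⟨g, by rw [hs, ha]⟩
    have hK : K = F := hFmax K ⟨hKsq, (hKmem t).mpr (Or.inl htF), S ∪ {a}, hScond, hcl⟩ hFK
    have haK : a ∈ K := Or.inr (by rw [ha2]; exact F.one_mem)
    rw [← hK]
    exact haK
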